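/- If α < 5/9, then there exist a, b > 0 with a ≠ b such that M(a,b) < α·G(a,b) + (1−α)·C(a,b); that is, the constant 5/9 in the lower bound α·G + (1−α)·C < M is optimal. -/
import Mathlib

noncomputable def NS (a b : ℝ) : ℝ := (a - b) / (2 * Real.arsinh ((a - b) / (a + b)))
noncomputable def Gmean (a b : ℝ) : ℝ := Real.sqrt (a * b)
noncomputable def Cmean (a b : ℝ) : ℝ := (a ^ 2 + b ^ 2) / (a + b)

open Real Finset in
lemma sinh_poly_bound {u : ℝ} (h0 : 0 ≤ u) (h1 : u ≤ 1) :
    Real.sinh u ≤ u + u ^ 3 / 6 + u ^ 5 / 100 := by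
  have habs : |u| = u := abs_of_nonneg h0
  have hpos : (0:ℕ) < 5 := by norm_num
  have hb1 := Real.exp_bound (x := u) (by rwa [habs]) hpos
  have hb2 := Real.exp_bound (x := -u) (by rwa [abs_neg, habs]) hpos
  rw [habs] at hb1
  rw [abs_neg, habs] at hb2
  have hs1 : (∑ m ∈ range 5, u ^ m / m.factorial)
      = 1 + u + u ^ 2 / 2 + u ^ 3 / 6 + u ^ 4 / 24 := by
    simp [Finset.sum_range_succ, Nat.factorial]
  have hs2 : (∑ m ∈ range 5, (-u) ^ m / m.factorial)
      = 1 - u + u ^ 2 / 2 - u ^ 3 / 6 + u ^ 4 / 24 := by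
    simp [Finset.sum_range_succ, Nat.factorial]
    ring
  rw [hs1] at hb1
  rw [hs2] at hb2
  norm_num [Nat.factorial] at hb1 hb2
  have e1 := (abs_le.1 hb1).2
  have e2 := (abs_le.1 hb2).1
  rw [Real.sinh_eq]
  nlinarith [pow_nonneg h0 5]

lemma arsinh_lower {t : ℝ} (h0 : 0 < t) (h1 : t ≤ 1 / 2) :
    t - t ^ 3 / 6 ≤ Real.arsinh t := by
  have hs : t ^ 2 ≤ 1 / 4 := by nlinarith
  have hu0 : 0 ≤ t - t ^ 3 / 6 := by nlinarith [mul_le_mul_of_nonneg_left hs h0.le]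
  have hu1 : t - t ^ 3 / 6 ≤ 1 := by nlinarith [pow_nonneg h0.le 3]
  have hsb := sinh_poly_bound hu0 hu1
  have h3 : (t - t ^ 3 / 6) ^ 3 ≤ t ^ 3 - t ^ 5 / 2 + t ^ 7 / 12 := by
    nlinarith [pow_nonneg h0.le 9]
  have h5 : (t - t ^ 3 / 6) ^ 5 ≤ t ^ 5 :=
    pow_le_pow_left₀ hu0 (by nlinarith [pow_nonneg h0.le 3]) 5
  have h7 : t ^ 7 ≤ t ^ 5 / 4 := by
    nlinarith [mul_le_mul_of_nonneg_left hs (pow_nonneg h0.le 5)]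
  have hst : Real.sinh (t - t ^ 3 / 6) ≤ t := by nlinarith [pow_nonneg h0.le 5]
  rw [← Real.sinh_le_sinh, Real.sinh_arsinh]
  exact hst

set_option maxHeartbeats 1000000 in
theorem stmt2 (α : ℝ) (hα : α < 5 / 9) :
    ∃ a b : ℝ, 0 < a ∧ 0 < b ∧ a ≠ b ∧
      NS a b < α * Gmean a b + (1 - α) * Cmean a b := by
  set β : ℝ := max α 0 with hβdef
  have hβ0 : 0 ≤ β := le_max_right _ _
  have hαβ : α ≤ β := le_max_left _ _
  have hβ : β < 5 / 9 := max_lt hα (by norm_num)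
  set m : ℝ := min (1/4) (5/9 - β) with hmdef
  have hm0 : 0 < m := lt_min (by norm_num) (by linarith)
  have hm14 : m ≤ 1/4 := min_le_left _ _
  have hmε : m ≤ 5/9 - β := min_le_right _ _
  set t : ℝ := Real.sqrt m with htdef
  have ht0 : 0 < t := Real.sqrt_pos.2 hm0
  have ht2 : t ^ 2 = m := Real.sq_sqrt hm0.le
  have hts : t ^ 2 ≤ 1/4 := by rw [ht2]; exact hm14
  have ht12 : t ≤ 1/2 := by nlinarith
  have hβt : β ≤ 5/9 - t ^ 2 := by rw [ht2]; linarith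
  refine ⟨1 + t, 1 - t, by linarith, by linarith, by intro h; linarith, ?_⟩
  have harsinh : t - t ^ 3 / 6 ≤ Real.arsinh t := arsinh_lower ht0 ht12
  have hden : 0 < t - t ^ 3 / 6 := by nlinarith [mul_le_mul_of_nonneg_left hts ht0.le]
  have hars0 : 0 < Real.arsinh t := lt_of_lt_of_le hden harsinh
  have hNSeq : NS (1 + t) (1 - t) = t / Real.arsinh t := by
    rw [NS, show (1 + t) - (1 - t) = 2 * t by ring, show (1 + t) + (1 - t) = 2 by ring,
      show (2 * t) / 2 = t by ring]
    exact mul_div_mul_left t _ two_ne_zero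
  have hCeq : Cmean (1 + t) (1 - t) = 1 + t ^ 2 := by
    rw [Cmean, show (1 + t) + (1 - t) = 2 by ring]; ring
  have hGeq : Gmean (1 + t) (1 - t) = Real.sqrt (1 - t ^ 2) := by
    rw [Gmean]; congr 1; ring
  rw [hNSeq, hCeq, hGeq]
  set G : ℝ := Real.sqrt (1 - t ^ 2) with hGdef
  have hGnn : 0 ≤ G := Real.sqrt_nonneg _
  have hG2 : G ^ 2 = 1 - t ^ 2 := Real.sq_sqrt (by nlinarith)
  have hGlb : 1 - t ^ 2 / 2 - t ^ 4 ≤ G :=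
    Real.le_sqrt_of_sq_le (by nlinarith [sq_nonneg (t^2), pow_nonneg ht0.le 6, pow_nonneg ht0.le 8])
  have hGub : G ≤ 1 := by nlinarith
  -- reduce α to β
  have hmono : β * G + (1 - β) * (1 + t ^ 2) ≤ α * G + (1 - α) * (1 + t ^ 2) := by
    nlinarith [mul_nonneg (sub_nonneg.2 hαβ) (show 0 ≤ 1 + t ^ 2 - G by nlinarith [sq_nonneg t])]
  refine lt_of_lt_of_le ?_ hmono
  have hNSle : t / Real.arsinh t ≤ t / (t - t ^ 3 / 6) := by
    gcongr

  refine lt_of_le_of_lt hNSle ?_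
  rw [div_lt_iff₀ hden]
  have h1 : β * (1 - t^2/2 - t^4) + (1 - β) * (1 + t^2) ≤ β * G + (1 - β) * (1 + t^2) := by
    nlinarith [mul_le_mul_of_nonneg_left hGlb hβ0]
  have h2 : 1 + t^2/6 + 17/18*t^4 + t^6 ≤ β * (1 - t^2/2 - t^4) + (1 - β) * (1 + t^2) := by
    nlinarith [mul_nonneg (show 0 ≤ 5/9 - t^2 - β by linarith)
      (show (0:ℝ) ≤ 3*t^2/2 + t^4 by positivity)]
  have ht4 : t ^ 4 ≤ 1/16 := by nlinarith
  have h9 : t ^ 9 ≤ t ^ 5 / 16 := by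
    nlinarith [mul_le_mul_of_nonneg_left ht4 (pow_nonneg ht0.le 5)]
  have h3 : t < (1 + t^2/6 + 17/18*t^4 + t^6) * (t - t^3/6) := by
    nlinarith [pow_pos ht0 5, pow_pos ht0 7]
  exact h3.trans_le (mul_le_mul_of_nonneg_right (h2.trans h1) hden.le)
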